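/- If Y ~ Mult(n, p) is a multinomial random vector with m ≥ 2 categories, and i ≠ j are indices with probabilities p_i, p_j ∈ [0,1] not both zero, then P(Y_i = Y_j) → 0 as n → ∞. -/

import Mathlib

open Filter MeasureTheory ProbabilityTheory Complex Real


lemma my_int_bdd {Ω : Type*} [MeasurableSpace Ω] {P : Measure Ω} [IsProbabilityMeasure P]
    {f : Ω → ℝ} (hm : Measurable f) (hb : ∀ ω, |f ω| ≤ 1) : Integrable f P :=
  (integrable_const (1:ℝ)).mono' hm.aestronglyMeasurable (Filter.Eventually.of_forall fun ω => by
    simpa using hb ω)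

lemma my_int_bddC {Ω : Type*} [MeasurableSpace Ω] {P : Measure Ω} [IsProbabilityMeasure P]
    {f : Ω → ℂ} (hm : Measurable f) (hb : ∀ ω, ‖f ω‖ ≤ 1) : Integrable f P :=
  (integrable_const (1:ℝ)).mono' hm.aestronglyMeasurable (Filter.Eventually.of_forall hb)

lemma my_integral_mul {Ω : Type*} [MeasurableSpace Ω] {P : Measure Ω} [IsProbabilityMeasure P]
    {F G : Ω → ℂ} (h : IndepFun F G P) (hFm : Measurable F) (hGm : Measurable G)
    (hFb : ∀ ω, ‖F ω‖ ≤ 1) (hGb : ∀ ω, ‖G ω‖ ≤ 1) :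
    ∫ ω, F ω * G ω ∂P = (∫ ω, F ω ∂P) * ∫ ω, G ω ∂P := by
  have habs : ∀ (z : ℂ), ‖z‖ ≤ 1 → |z.re| ≤ 1 ∧ |z.im| ≤ 1 := fun z hz =>
    ⟨le_trans (Complex.abs_re_le_norm z) hz, le_trans (Complex.abs_im_le_norm z) hz⟩
  have hfr : Integrable (fun ω => (F ω).re) P :=
    my_int_bdd (Complex.measurable_re.comp hFm) fun ω => (habs _ (hFb ω)).1
  have hfi : Integrable (fun ω => (F ω).im) P :=
    my_int_bdd (Complex.measurable_im.comp hFm) fun ω => (habs _ (hFb ω)).2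
  have hgr : Integrable (fun ω => (G ω).re) P :=
    my_int_bdd (Complex.measurable_re.comp hGm) fun ω => (habs _ (hGb ω)).1
  have hgi : Integrable (fun ω => (G ω).im) P :=
    my_int_bdd (Complex.measurable_im.comp hGm) fun ω => (habs _ (hGb ω)).2
  have hmul : ∀ {u v : Ω → ℝ}, Measurable u → Measurable v → (∀ ω, |u ω| ≤ 1) →
      (∀ ω, |v ω| ≤ 1) → Integrable (fun ω => u ω * v ω) P := by
    intro u v hu hv hbu hbv
    exact my_int_bdd (hu.mul hv) fun ω => by
      rw [abs_mul]
      exact mul_le_one₀ (hbu ω) (abs_nonneg _) (hbv ω)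
  -- independence of parts
  have hind : ∀ (φ ψ : ℂ → ℝ), Measurable φ → Measurable ψ →
      IndepFun (fun ω => φ (F ω)) (fun ω => ψ (G ω)) P := fun φ ψ hφ hψ => h.comp hφ hψ
  have e1 := ProbabilityTheory.IndepFun.integral_fun_mul_eq_mul_integral (hind _ _ Complex.measurable_re Complex.measurable_re) hfr.1 hgr.1
  have e2 := ProbabilityTheory.IndepFun.integral_fun_mul_eq_mul_integral (hind _ _ Complex.measurable_im Complex.measurable_im) hfi.1 hgi.1
  have e3 := ProbabilityTheory.IndepFun.integral_fun_mul_eq_mul_integral (hind _ _ Complex.measurable_re Complex.measurable_im) hfr.1 hgi.1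
  have e4 := ProbabilityTheory.IndepFun.integral_fun_mul_eq_mul_integral (hind _ _ Complex.measurable_im Complex.measurable_re) hfi.1 hgr.1
  have hFG : Integrable (fun ω => F ω * G ω) P :=
    my_int_bddC (hFm.mul hGm) fun ω => by
      rw [norm_mul]; exact mul_le_one₀ (hFb ω) (norm_nonneg _) (hGb ω)
  have hre : ∀ {H K : Ω → ℂ}, (h' : Integrable (fun ω => H ω * K ω) P) →
    ∫ ω, H ω * K ω ∂P = ((∫ ω, (H ω * K ω).re ∂P : ℝ) : ℂ)
        + ((∫ ω, (H ω * K ω).im ∂P : ℝ) : ℂ) * Complex.I := by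
    intro H K h'
    exact (integral_re_add_im h').symm
  rw [hre hFG]
  have hF' : ∫ ω, F ω ∂P = ((∫ ω, (F ω).re ∂P : ℝ) : ℂ) + ((∫ ω, (F ω).im ∂P : ℝ) : ℂ) * Complex.I :=
    (integral_re_add_im (my_int_bddC hFm hFb)).symm
  have hG' : ∫ ω, G ω ∂P = ((∫ ω, (G ω).re ∂P : ℝ) : ℂ) + ((∫ ω, (G ω).im ∂P : ℝ) : ℂ) * Complex.I :=
    (integral_re_add_im (my_int_bddC hGm hGb)).symm
  rw [hF', hG']
  have hre2 : (fun ω => (F ω * G ω).re) = fun ω => (F ω).re * (G ω).re - (F ω).im * (G ω).im := by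
    funext ω; simp [Complex.mul_re]
  have him2 : (fun ω => (F ω * G ω).im) = fun ω => (F ω).re * (G ω).im + (F ω).im * (G ω).re := by
    funext ω; simp [Complex.mul_im]
  have hmr : Measurable fun ω => (F ω).re := Complex.measurable_re.comp hFm
  have hmi : Measurable fun ω => (F ω).im := Complex.measurable_im.comp hFm
  have hnr : Measurable fun ω => (G ω).re := Complex.measurable_re.comp hGm
  have hni : Measurable fun ω => (G ω).im := Complex.measurable_im.comp hGm
  have e1' : ∫ ω, (F ω).re * (G ω).re ∂P = (∫ ω, (F ω).re ∂P) * ∫ ω, (G ω).re ∂P := e1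
  have e2' : ∫ ω, (F ω).im * (G ω).im ∂P = (∫ ω, (F ω).im ∂P) * ∫ ω, (G ω).im ∂P := e2
  have e3' : ∫ ω, (F ω).re * (G ω).im ∂P = (∫ ω, (F ω).re ∂P) * ∫ ω, (G ω).im ∂P := e3
  have e4' : ∫ ω, (F ω).im * (G ω).re ∂P = (∫ ω, (F ω).im ∂P) * ∫ ω, (G ω).re ∂P := e4
  rw [hre2, him2,
    integral_sub (hmul hmr hnr (fun ω => (habs _ (hFb ω)).1) fun ω => (habs _ (hGb ω)).1)
      (hmul hmi hni (fun ω => (habs _ (hFb ω)).2) fun ω => (habs _ (hGb ω)).2),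
    integral_add (hmul hmr hni (fun ω => (habs _ (hFb ω)).1) fun ω => (habs _ (hGb ω)).2)
      (hmul hmi hnr (fun ω => (habs _ (hFb ω)).2) fun ω => (habs _ (hGb ω)).1),
    e1', e2', e3', e4']
  push_cast
  ring_nf
  rw [Complex.I_sq]
  ring

-- single expectation
lemma my_single {Ω : Type*} [MeasurableSpace Ω] (P : Measure Ω) [IsProbabilityMeasure P]
    {m : ℕ} (p : Fin m → ℝ) (hp0 : ∀ v, 0 ≤ p v) (Y : Ω → Fin m) (hmeas : Measurable Y)
    (hdist : ∀ v, P {ω | Y ω = v} = ENNReal.ofReal (p v)) (g : Fin m → ℂ) :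
    ∫ ω, g (Y ω) ∂P = ∑ v, (p v : ℂ) * g v := by
  have hrw : (fun ω => g (Y ω)) =
      fun ω => ∑ v : Fin m, Set.indicator (Y ⁻¹' {v}) (fun _ => g v) ω := by
    funext ω
    have hv : ∀ v : Fin m, Set.indicator (Y ⁻¹' {v}) (fun _ => g v) ω
        = if Y ω = v then g v else 0 := fun v => by
      by_cases h : Y ω = v <;> simp [Set.indicator_apply, Set.mem_preimage, h]
    simp only [hv]
    rw [Finset.sum_ite_eq Finset.univ (Y ω) g]
    simp
  rw [hrw, integral_finset_sum]
  · refine Finset.sum_congr rfl fun v _ => ?_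
    rw [integral_indicator_const (g v) (hmeas (measurableSet_singleton v))]
    have : Y ⁻¹' {v} = {ω | Y ω = v} := rfl
    rw [this, measureReal_def, hdist v, ENNReal.toReal_ofReal (hp0 v), Complex.real_smul]
  · intro v _
    exact (integrable_const (g v)).indicator (hmeas (measurableSet_singleton v))

-- product expectation
lemma my_prod {Ω : Type*} [MeasurableSpace Ω] (P : Measure Ω) [IsProbabilityMeasure P]
    {m : ℕ} (X : ℕ → Ω → Fin m) (hXmeas : ∀ k, Measurable (X k))
    (hXindep : iIndepFun X P)
    (g : Fin m → ℂ) (hg : ∀ v, ‖g v‖ = 1) (c : ℂ)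
    (hc : ∀ k, ∫ ω, g (X k ω) ∂P = c) (n : ℕ) :
    ∫ ω, ∏ k ∈ Finset.range n, g (X k ω) ∂P = c ^ n := by
  have hgm : Measurable g := measurable_of_countable g
  have hfm : ∀ k, Measurable fun ω => g (X k ω) := fun k => hgm.comp (hXmeas k)
  have hind : iIndepFun (fun k ω => g (X k ω)) P :=
    hXindep.comp (fun _ => g) (fun _ => hgm)
  induction n with
  | zero => simp
  | succ n ih =>
    have hprodmeas : Measurable fun ω => ∏ k ∈ Finset.range n, g (X k ω) :=
      Finset.measurable_prod _ fun k _ => hfm k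
    have hindep2 : IndepFun (fun ω => ∏ k ∈ Finset.range n, g (X k ω))
        (fun ω => g (X n ω)) P := by
      have := hind.indepFun_prod_range_succ (fun k => hfm k) n
      have heq : (∏ j ∈ Finset.range n, fun ω => g (X j ω)) =
          fun ω => ∏ k ∈ Finset.range n, g (X k ω) := by
        funext ω; rw [Finset.prod_apply]
      rwa [heq] at this
    have hb1 : ∀ ω, ‖∏ k ∈ Finset.range n, g (X k ω)‖ ≤ 1 := fun ω => by
      rw [norm_prod]
      exact le_of_eq (by simp [hg])
    have hb2 : ∀ ω, ‖g (X n ω)‖ ≤ 1 := fun ω => le_of_eq (hg _)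
    simp only [Finset.prod_range_succ]
    rw [show (fun ω => (∏ k ∈ Finset.range n, g (X k ω)) * g (X n ω)) =
      fun ω => (∏ k ∈ Finset.range n, g (X k ω)) * g (X n ω) from rfl]
    rw [my_integral_mul hindep2 hprodmeas (hfm n) hb1 hb2, ih, hc n, pow_succ]

-- interval integral of exp(I t z)
lemma my_intexp (z : ℤ) :
    ∫ t in Set.Ioc (-π) π, Complex.exp (Complex.I * t * z) =
      if z = 0 then ((2 * π : ℝ) : ℂ) else 0 := by
  have hle : (-π : ℝ) ≤ π := by linarith [Real.pi_pos]
  rw [← intervalIntegral.integral_of_le hle]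
  by_cases hz : z = 0
  · subst hz
    simp [Complex.ofReal_mul]
    ring
  · have hc : Complex.I * (z : ℂ) ≠ 0 := by
      simp [Complex.I_ne_zero, Int.cast_ne_zero, hz]
    have hrw : ∀ t : ℝ, Complex.I * t * z = (Complex.I * z) * t := fun t => by ring
    simp only [hrw]
    rw [integral_exp_mul_complex hc]
    have h1 : Complex.exp (Complex.I * z * (π : ℝ)) = (-1 : ℂ) ^ z := by
      rw [show Complex.I * z * (π : ℝ) = z * ((π : ℝ) * Complex.I) by ring,
        Complex.exp_int_mul, Complex.exp_pi_mul_I]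
    have h2 : Complex.exp (Complex.I * z * ((-π : ℝ) : ℂ)) = (-1 : ℂ) ^ (-z) := by
      rw [show Complex.I * z * ((-π : ℝ) : ℂ) = ((-z : ℤ) : ℂ) * ((π : ℝ) * Complex.I) by
          push_cast; ring,
        Complex.exp_int_mul, Complex.exp_pi_mul_I]
    rw [show ((-π : ℝ) : ℂ) = (↑(-π : ℝ) : ℂ) from rfl] at h2
    rw [h1, h2, if_neg hz, zpow_neg]
    have : ((-1 : ℂ) ^ z)⁻¹ = (-1 : ℂ) ^ z := by
      rw [← inv_zpow]
      norm_num
    rw [this, sub_self, zero_div]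


section Degenerate

lemma my_degenerate {Ω : Type*} [MeasurableSpace Ω] (P : Measure Ω) [IsProbabilityMeasure P]
    {m : ℕ} (p : Fin m → ℝ) (X : ℕ → Ω → Fin m) (hXmeas : ∀ k, Measurable (X k))
    (hXindep : iIndepFun X P)
    (hXdist : ∀ k v, P {ω | X k ω = v} = ENNReal.ofReal (p v))
    (i j : Fin m) (hpi : p i = 0) (hpj : 0 < p j) (hpj1 : p j ≤ 1) :
    Tendsto (fun n => P {ω | ((Finset.range n).filter fun k => X k ω = i).card =
        ((Finset.range n).filter fun k => X k ω = j).card}) atTop (nhds 0) := by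
  have hsub : ∀ n, {ω | ((Finset.range n).filter fun k => X k ω = i).card =
        ((Finset.range n).filter fun k => X k ω = j).card} ⊆
      (⋃ k ∈ Finset.range n, {ω | X k ω = i}) ∪ ⋂ k ∈ Finset.range n, X k ⁻¹' ({j}ᶜ) := by
    intro n ω hω
    simp only [Set.mem_setOf_eq] at hω
    by_cases hA : ∃ k ∈ Finset.range n, X k ω = i
    · obtain ⟨k, hk, hki⟩ := hA
      exact Or.inl (Set.mem_biUnion hk hki)
    · push_neg at hA
      right
      have h0 : ((Finset.range n).filter fun k => X k ω = i).card = 0 := by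
        rw [Finset.card_eq_zero, Finset.filter_eq_empty_iff]
        exact hA
      rw [h0] at hω
      have h0' : ((Finset.range n).filter fun k => X k ω = j) = ∅ :=
        Finset.card_eq_zero.mp hω.symm
      rw [Finset.filter_eq_empty_iff] at h0'
      refine Set.mem_iInter₂.mpr fun k hk => ?_
      simpa using h0' hk
  have hI : ∀ n, P (⋂ k ∈ Finset.range n, X k ⁻¹' ({j}ᶜ)) =
      ENNReal.ofReal ((1 - p j) ^ n) := by
    intro n
    rw [hXindep.meas_biInter (S := Finset.range n)
      (fun k _ => ⟨{j}ᶜ, (measurableSet_singleton j).compl, rfl⟩)]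
    have hterm : ∀ k, P (X k ⁻¹' ({j}ᶜ)) = ENNReal.ofReal (1 - p j) := by
      intro k
      rw [Set.preimage_compl, measure_compl (hXmeas k (measurableSet_singleton j)) (measure_ne_top _ _)]
      have : P (X k ⁻¹' {j}) = ENNReal.ofReal (p j) := hXdist k j
      rw [this, ENNReal.ofReal_sub _ hpj.le, ENNReal.ofReal_one, measure_univ]
    simp only [hterm]
    rw [Finset.prod_const, Finset.card_range, ← ENNReal.ofReal_pow (by linarith)]
  have hbound : ∀ n, P {ω | ((Finset.range n).filter fun k => X k ω = i).card =
        ((Finset.range n).filter fun k => X k ω = j).card} ≤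
      ENNReal.ofReal ((1 - p j) ^ n) := by
    intro n
    refine le_trans (measure_mono (hsub n)) (le_trans (measure_union_le _ _) ?_)
    have hU : P (⋃ k ∈ Finset.range n, {ω | X k ω = i}) = 0 := by
      refine le_antisymm (le_trans (measure_biUnion_finset_le _ _) ?_) zero_le
      simp [hXdist, hpi]
    rw [hU, hI n, zero_add]
  have hto : Tendsto (fun n => ENNReal.ofReal ((1 - p j) ^ n)) atTop (nhds 0) := by
    have := ENNReal.tendsto_ofReal
      (tendsto_pow_atTop_nhds_zero_of_lt_one (by linarith) (by linarith) :
        Tendsto (fun n : ℕ => (1 - p j) ^ n) atTop (nhds 0))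
    simpa using this
  exact tendsto_of_tendsto_of_tendsto_of_le_of_le tendsto_const_nhds hto
    (fun n => zero_le) hbound

end Degenerate


/-- If `Y ~ Mult(n, p)` is a multinomial random vector with `m ≥ 2` categories
(realized as the counts `Y n ω i = #{k < n : X k ω = i}` of i.i.d. categorical
variables `X k` with `P(X k = i) = p i`), and `i ≠ j` are indices with
probabilities `p i, p j ∈ [0,1]` not both zero, then `P(Y_i = Y_j) → 0`
as `n → ∞`. -/
theorem multinomial_components_distinct
    {Ω : Type*} [MeasurableSpace Ω] (P : Measure Ω) [IsProbabilityMeasure P]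
    (m : ℕ) (hm : 2 ≤ m) (p : Fin m → ℝ)
    (hp01 : ∀ i, 0 ≤ p i ∧ p i ≤ 1) (hpsum : ∑ i, p i = 1)
    (X : ℕ → Ω → Fin m) (hXmeas : ∀ k, Measurable (X k))
    (hXindep : iIndepFun X P)
    (hXdist : ∀ k i, P {ω | X k ω = i} = ENNReal.ofReal (p i))
    (i j : Fin m) (hij : i ≠ j) (hnotzero : ¬(p i = 0 ∧ p j = 0)) :
    Tendsto
      (fun n => P {ω |
          ((Finset.range n).filter fun k => X k ω = i).card =
          ((Finset.range n).filter fun k => X k ω = j).card})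
      atTop (nhds 0) := by
  classical
  by_cases hpi0 : p i = 0
  · have hpj : 0 < p j := by
      rcases lt_or_eq_of_le (hp01 j).1 with h | h
      · exact h
      · exact absurd ⟨hpi0, h.symm⟩ hnotzero
    exact my_degenerate P p X hXmeas hXindep hXdist i j hpi0 hpj (hp01 j).2
  by_cases hpj0 : p j = 0
  · have hpi : 0 < p i := lt_of_le_of_ne (hp01 i).1 (Ne.symm hpi0)
    have := my_degenerate P p X hXmeas hXindep hXdist j i hpj0 hpi (hp01 i).2
    convert this using 2 with n
    congr 1
    ext ω
    exact eq_comm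
  -- main case
  have hpi : 0 < p i := lt_of_le_of_ne (hp01 i).1 (Ne.symm hpi0)
  have hpj : 0 < p j := lt_of_le_of_ne (hp01 j).1 (Ne.symm hpj0)
  have hpij : p i + p j ≤ 1 := by
    have : ∑ v ∈ ({i, j} : Finset (Fin m)), p v ≤ ∑ v, p v :=
      Finset.sum_le_sum_of_subset_of_nonneg (Finset.subset_univ _)
        (fun v _ _ => (hp01 v).1)
    rwa [Finset.sum_pair hij, hpsum] at this
  set ζ : Fin m → ℤ := fun v => (if v = i then 1 else 0) - (if v = j then 1 else 0) with hζ
  set S : ℕ → Ω → ℤ := fun n ω => ∑ k ∈ Finset.range n, ζ (X k ω) with hSdef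
  have hSmeas : ∀ n, Measurable (S n) := fun n =>
    Finset.measurable_sum _ fun k _ => (measurable_of_countable ζ).comp (hXmeas k)
  have hEset : ∀ n, {ω | ((Finset.range n).filter fun k => X k ω = i).card =
      ((Finset.range n).filter fun k => X k ω = j).card} = {ω | S n ω = 0} := by
    intro n
    ext ω
    simp only [Set.mem_setOf_eq]
    have hrw : S n ω = (((Finset.range n).filter fun k => X k ω = i).card : ℤ) -
        (((Finset.range n).filter fun k => X k ω = j).card : ℤ) := by
      rw [hSdef]
      simp only [hζ]
      rw [Finset.sum_sub_distrib]
      congr 1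
      · rw [Finset.card_filter, Nat.cast_sum]
        simp
      · rw [Finset.card_filter, Nat.cast_sum]
        simp
    rw [hrw, sub_eq_zero]
    exact Nat.cast_inj.symm
  set g : ℝ → Fin m → ℂ := fun t v => Complex.exp (Complex.I * t * (ζ v : ℂ)) with hgdef
  have hgnorm : ∀ t v, ‖g t v‖ = 1 := by
    intro t v
    rw [hgdef]
    simp only [Complex.norm_exp]
    have : (Complex.I * t * (ζ v : ℂ)).re = 0 := by
      simp [Complex.mul_re, Complex.mul_im]
    rw [this, Real.exp_zero]
  set c : ℝ → ℂ := fun t => ∑ v, (p v : ℂ) * g t v with hcdef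
  have hexp_single : ∀ (t : ℝ) (k : ℕ), ∫ ω, g t (X k ω) ∂P = c t := fun t k =>
    my_single P p (fun v => (hp01 v).1) (X k) (hXmeas k) (fun v => hXdist k v) (g t)
  have hprod : ∀ (t : ℝ) (n : ℕ),
      ∫ ω, ∏ k ∈ Finset.range n, g t (X k ω) ∂P = (c t) ^ n := fun t n =>
    my_prod P X hXmeas hXindep (g t) (hgnorm t) (c t) (fun k => hexp_single t k) n
  have hζi : ζ i = 1 := by simp [hζ, hij]
  have hζj : ζ j = -1 := by simp [hζ, Ne.symm hij]
  have hcform : ∀ t : ℝ, c t = ((1 - p i - p j + (p i + p j) * Real.cos t : ℝ) : ℂ)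
      + ((p i - p j) * Real.sin t : ℝ) * Complex.I := by
    intro t
    have h1 : ∑ v, (p v : ℂ) = 1 := by exact_mod_cast congrArg (fun x : ℝ => (x : ℂ)) hpsum
    have hsupp : ∀ v ∈ Finset.univ, v ∉ ({i, j} : Finset (Fin m)) →
        (p v : ℂ) * (g t v - 1) = 0 := by
      intro v _ hv
      simp only [Finset.mem_insert, Finset.mem_singleton, not_or] at hv
      have hzv : ζ v = 0 := by simp [hζ, hv.1, hv.2]
      simp [hgdef, hzv]
    have hgi : g t i = Complex.cos t + Complex.sin t * Complex.I := by
      rw [hgdef]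
      simp only [hζi]
      rw [show Complex.I * (t : ℂ) * ((1 : ℤ) : ℂ) = (t : ℂ) * Complex.I by push_cast; ring,
        Complex.exp_mul_I]
    have hgj : g t j = Complex.cos t - Complex.sin t * Complex.I := by
      rw [hgdef]
      simp only [hζj]
      rw [show Complex.I * (t : ℂ) * ((-1 : ℤ) : ℂ) = (-(t : ℂ)) * Complex.I by push_cast; ring,
        Complex.exp_mul_I, Complex.cos_neg, Complex.sin_neg]
      ring
    calc c t = ∑ v, ((p v : ℂ) * (g t v - 1) + (p v : ℂ)) := by
          rw [hcdef]
          exact Finset.sum_congr rfl fun v _ => by ring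
      _ = (∑ v, (p v : ℂ) * (g t v - 1)) + ∑ v, (p v : ℂ) := Finset.sum_add_distrib
      _ = ((p i : ℂ) * (g t i - 1) + (p j : ℂ) * (g t j - 1)) + 1 := by
          rw [h1, ← Finset.sum_subset (Finset.subset_univ ({i, j} : Finset (Fin m))) hsupp,
            Finset.sum_pair hij]
      _ = _ := by
          rw [hgi, hgj]
          push_cast
          ring
  have habs : ∀ t : ℝ, ‖c t‖ = Real.sqrt ((1 - p i - p j + (p i + p j) * Real.cos t) ^ 2
      + ((p i - p j) * Real.sin t) ^ 2) := by
    intro t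
    rw [hcform t, Complex.norm_add_mul_I]
  have hkeyineq : ∀ t : ℝ, 1 - ((1 - p i - p j + (p i + p j) * Real.cos t) ^ 2
      + ((p i - p j) * Real.sin t) ^ 2) = 2 * (1 - p i - p j) * (p i + p j) * (1 - Real.cos t)
      + 4 * (p i * p j) * (1 - Real.cos t ^ 2) := by
    intro t
    have hs : Real.sin t ^ 2 = 1 - Real.cos t ^ 2 := by
      have := Real.sin_sq_add_cos_sq t
      linarith
    linear_combination (-(p i - p j) ^ 2) * hs
  have hc_le : ∀ t : ℝ, ‖c t‖ ≤ 1 := by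
    intro t
    rw [habs t]
    apply Real.sqrt_le_one.mpr
    have h1 := Real.cos_le_one t
    have h2 := Real.neg_one_le_cos t
    have hT1 : 0 ≤ 2 * (1 - p i - p j) * (p i + p j) * (1 - Real.cos t) :=
      mul_nonneg (mul_nonneg (by linarith) (by linarith)) (by linarith)
    have hT2 : 0 ≤ 4 * (p i * p j) * (1 - Real.cos t ^ 2) :=
      mul_nonneg (by nlinarith) (by nlinarith)
    linarith [hkeyineq t, hT1, hT2]
  have hc_lt : ∀ t : ℝ, t ∈ Set.Ioc (-π) π → t ≠ 0 → t ≠ π → ‖c t‖ < 1 := by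
    intro t ht ht0 htπ
    have htπ' : t < π := lt_of_le_of_ne ht.2 htπ
    have hcos1 : Real.cos t < 1 := by
      refine lt_of_le_of_ne (Real.cos_le_one t) fun h => ht0 ?_
      have hpos := Real.pi_pos
      exact (Real.cos_eq_one_iff_of_lt_of_lt (by linarith [ht.1]) (by linarith)).mp h
    have hcos2 : -1 < Real.cos t := by
      have hhalf : Real.cos (t / 2) > 0 := by
        apply Real.cos_pos_of_mem_Ioo
        constructor <;> [linarith [ht.1]; linarith]
      have : Real.cos t = 2 * Real.cos (t / 2) ^ 2 - 1 := by
        rw [show t = 2 * (t / 2) by ring, Real.cos_two_mul]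
        ring_nf
      nlinarith
    rw [habs t]
    have hlt : (1 - p i - p j + (p i + p j) * Real.cos t) ^ 2
        + ((p i - p j) * Real.sin t) ^ 2 < 1 := by
      have h1 := Real.cos_le_one t
      have hT1 : 0 ≤ 2 * (1 - p i - p j) * (p i + p j) * (1 - Real.cos t) :=
        mul_nonneg (mul_nonneg (by linarith) (by linarith)) (by linarith)
      have hT2 : 0 < 4 * (p i * p j) * (1 - Real.cos t ^ 2) :=
        mul_pos (by positivity) (by nlinarith)
      linarith [hkeyineq t, hT1, hT2]
    calc Real.sqrt ((1 - p i - p j + (p i + p j) * Real.cos t) ^ 2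
        + ((p i - p j) * Real.sin t) ^ 2) < Real.sqrt 1 := by
          apply Real.sqrt_lt_sqrt (by positivity) hlt
      _ = 1 := Real.sqrt_one
  -- key Fourier identity
  have hπ : (0:ℝ) < π := Real.pi_pos
  set ν : Measure ℝ := volume.restrict (Set.Ioc (-π) π) with hν
  haveI hfinν : IsFiniteMeasure ν := by
    constructor
    rw [hν, Measure.restrict_apply_univ]
    exact measure_Ioc_lt_top
  have hkey : ∀ n : ℕ, ((2 * π : ℝ) : ℂ) * ((P {ω | S n ω = 0}).toReal : ℂ)
      = ∫ t, (c t) ^ n ∂ν := by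
    intro n
    have hEmeas : MeasurableSet {ω | S n ω = 0} := (hSmeas n) (measurableSet_singleton 0)
    have hq : Measurable fun q : Ω × ℝ => Complex.exp (Complex.I * q.2 * (S n q.1 : ℂ)) := by
      apply Complex.continuous_exp.measurable.comp
      exact (measurable_const.mul (Complex.measurable_ofReal.comp measurable_snd)).mul
        ((measurable_of_countable (fun z : ℤ => (z : ℂ))).comp ((hSmeas n).comp measurable_fst))
    have hint : Integrable (Function.uncurry fun (ω : Ω) (t : ℝ) =>
        Complex.exp (Complex.I * t * (S n ω : ℂ))) (P.prod ν) := by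
      refine (integrable_const (1:ℝ)).mono' hq.aestronglyMeasurable
        (Filter.Eventually.of_forall fun q => ?_)
      show ‖Complex.exp (Complex.I * (q.2 : ℂ) * (S n q.1 : ℂ))‖ ≤ 1
      rw [Complex.norm_exp]
      have hre0 : (Complex.I * (q.2 : ℂ) * (S n q.1 : ℂ)).re = 0 := by
        simp [Complex.mul_re, Complex.mul_im]
      rw [hre0, Real.exp_zero]
    have hswap := MeasureTheory.integral_integral_swap
      (f := fun (ω : Ω) (t : ℝ) => Complex.exp (Complex.I * t * (S n ω : ℂ))) hint
    have hinner : ∀ ω, (∫ t, Complex.exp (Complex.I * t * (S n ω : ℂ)) ∂ν)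
        = Set.indicator {ω' | S n ω' = 0} (fun _ => ((2 * π : ℝ) : ℂ)) ω := by
      intro ω
      rw [hν, my_intexp (S n ω)]
      by_cases h : S n ω = 0 <;> simp [h, Set.indicator_apply]
    have hL : ∫ ω, (∫ t, Complex.exp (Complex.I * t * (S n ω : ℂ)) ∂ν) ∂P
        = ((P {ω | S n ω = 0}).toReal : ℝ) • ((2 * π : ℝ) : ℂ) := by
      simp_rw [hinner]
      exact integral_indicator_const _ hEmeas
    have hR : ∀ t : ℝ, ∫ ω, Complex.exp (Complex.I * t * (S n ω : ℂ)) ∂P = (c t) ^ n := by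
      intro t
      have hsum : ∀ ω, Complex.exp (Complex.I * t * (S n ω : ℂ))
          = ∏ k ∈ Finset.range n, g t (X k ω) := by
        intro ω
        have h1 : (Complex.I * t * (S n ω : ℂ))
            = ∑ k ∈ Finset.range n, Complex.I * t * (ζ (X k ω) : ℂ) := by
          rw [hSdef]
          push_cast
          rw [Finset.mul_sum]
        rw [h1, Complex.exp_sum]
      simp_rw [hsum]
      exact hprod t n
    calc ((2 * π : ℝ) : ℂ) * ((P {ω | S n ω = 0}).toReal : ℂ)
        = ∫ ω, (∫ t, Complex.exp (Complex.I * t * (S n ω : ℂ)) ∂ν) ∂P := by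
          rw [hL, Complex.real_smul]
          ring
      _ = ∫ t, (∫ ω, Complex.exp (Complex.I * t * (S n ω : ℂ)) ∂P) ∂ν := hswap
      _ = ∫ t, (c t) ^ n ∂ν := by
          exact integral_congr_ae (Filter.Eventually.of_forall fun t => hR t)
  have hbound2 : ∀ n : ℕ, (2 * π) * (P {ω | S n ω = 0}).toReal ≤ ∫ t, ‖c t‖ ^ n ∂ν := by
    intro n
    have h1 : (2 * π) * (P {ω | S n ω = 0}).toReal
        = ‖((2 * π : ℝ) : ℂ) * ((P {ω | S n ω = 0}).toReal : ℂ)‖ := by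
      rw [norm_mul, Complex.norm_real, Complex.norm_real, Real.norm_eq_abs, Real.norm_eq_abs,
        _root_.abs_of_nonneg (by positivity), _root_.abs_of_nonneg ENNReal.toReal_nonneg]
    rw [h1, hkey n]
    calc ‖∫ t, (c t) ^ n ∂ν‖ ≤ ∫ t, ‖(c t) ^ n‖ ∂ν := norm_integral_le_integral_norm _
      _ = ∫ t, ‖c t‖ ^ n ∂ν := by simp [norm_pow]
  have hccont : Continuous c := by
    rw [hcdef]
    apply continuous_finset_sum
    intro v _
    apply continuous_const.mul
    exact Complex.continuous_exp.comp
      ((continuous_const.mul Complex.continuous_ofReal).mul continuous_const)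
  have hDCT : Tendsto (fun n : ℕ => ∫ t, ‖c t‖ ^ n ∂ν) atTop (nhds 0) := by
    have h0 : Tendsto (fun n : ℕ => ∫ t, ‖c t‖ ^ n ∂ν) atTop (nhds (∫ _, (0:ℝ) ∂ν)) := by
      apply tendsto_integral_of_dominated_convergence (bound := fun _ => (1:ℝ))
      · intro n
        exact (hccont.norm.pow n).aestronglyMeasurable
      · exact integrable_const 1
      · intro n
        refine Filter.Eventually.of_forall fun t => ?_
        rw [Real.norm_eq_abs, _root_.abs_of_nonneg (by positivity)]
        exact pow_le_one₀ (norm_nonneg _) (hc_le t)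
      · have hnull : ∀ᵐ t ∂(volume : Measure ℝ), t ∉ ({0, π} : Set ℝ) := by
          rw [MeasureTheory.ae_iff]
          simp only [not_not]
          exact ((Set.finite_singleton π).insert 0).measure_zero volume
        rw [hν]
        filter_upwards [MeasureTheory.ae_restrict_mem measurableSet_Ioc,
          MeasureTheory.ae_restrict_of_ae hnull] with t ht hts
        simp only [Set.mem_insert_iff, Set.mem_singleton_iff, not_or] at hts
        exact tendsto_pow_atTop_nhds_zero_of_lt_one (norm_nonneg _) (hc_lt t ht hts.1 hts.2)
    simpa using h0
  have htoReal : Tendsto (fun n : ℕ => (P {ω | S n ω = 0}).toReal) atTop (nhds 0) := by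
    apply squeeze_zero (g := fun n : ℕ => (∫ t, ‖c t‖ ^ n ∂ν) / (2 * π))
      (fun n => ENNReal.toReal_nonneg)
    · intro n
      rw [le_div_iff₀ (by positivity : (0:ℝ) < 2 * π)]
      linarith [hbound2 n]
    · simpa using hDCT.div_const (2 * π)
  have hfun : (fun n => P {ω |
      ((Finset.range n).filter fun k => X k ω = i).card =
      ((Finset.range n).filter fun k => X k ω = j).card})
      = fun n => ENNReal.ofReal ((P {ω | S n ω = 0}).toReal) := by
    funext n
    rw [hEset n, ENNReal.ofReal_toReal (measure_ne_top _ _)]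
  rw [hfun]
  have := ENNReal.tendsto_ofReal htoReal
  simpa using this
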